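/- Let K be a number field, R = 𝓞_K its ring of integers, M₀ a finitely generated R-module, ι a finite type, and v : ι → M₀ a realization. Let i ∈ ι be neither a loop nor a coloop, i.e., rk({i}) = 1 and rk(ι \ {i}) = r where r = rk(ι). Then the evaluated Tutte polynomial satisfies deletion–contraction: T̃_{(M₀,v)}(x,y) = T̃_{(M₀, v|_{ι∖{i}})}(x,y) + T̃_{(M₀/span{v_i}, π∘v|_{ι∖{i}})}(x,y), where π : M₀ → M₀/Submodule.span R {v_i} is the canonical quotient map and each evaluated Tutte polynomial is computed with the rank function and rank of its own realization. -/

import Mathlib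

open scoped TensorProduct
open NumberField

/-- The cardinality of the torsion submodule is invariant under linear equivalence. -/
lemma natCard_torsion_congr {R M N : Type*} [CommRing R] [AddCommGroup M] [Module R M]
    [AddCommGroup N] [Module R N] (f : M ≃ₗ[R] N) :
    Nat.card (Submodule.torsion R M) = Nat.card (Submodule.torsion R N) := by
  refine Nat.card_congr ⟨fun x => ⟨f x, ?_⟩, fun y => ⟨f.symm y, ?_⟩, fun x => by simp, fun y => by simp⟩
  · obtain ⟨a, ha⟩ := (Submodule.mem_torsion_iff _).mp x.2
    refine (Submodule.mem_torsion_iff _).mpr ⟨a, ?_⟩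
    rw [Submonoid.smul_def] at ha ⊢
    rw [← map_smul, ha, map_zero]
  · obtain ⟨a, ha⟩ := (Submodule.mem_torsion_iff _).mp y.2
    refine (Submodule.mem_torsion_iff _).mpr ⟨a, ?_⟩
    rw [Submonoid.smul_def] at ha ⊢
    rw [← map_smul, ha, map_zero]

/-- Kernel of base change of the quotient by a cyclic submodule. -/
lemma ker_baseChange_mkQ {R : Type*} [CommRing R] (K : Type*) [CommRing K] [Algebra R K]
    {M : Type*} [AddCommGroup M] [Module R M] (x : M) :
    LinearMap.ker (LinearMap.baseChange K (Submodule.span R {x}).mkQ) =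
      Submodule.span K {(1 : K) ⊗ₜ[R] x} := by
  apply le_antisymm
  · intro z hz
    have hz' : z ∈ LinearMap.range (LinearMap.lTensor K (Submodule.span R {x}).subtype) := by
      rw [← lTensor_mkQ]
      show (LinearMap.lTensor K (Submodule.span R {x}).mkQ) z = 0
      rw [← LinearMap.baseChange_eq_ltensor]
      exact hz
    clear hz
    obtain ⟨w, rfl⟩ := hz'
    induction w using TensorProduct.induction_on with
    | zero => simp
    | tmul c n =>
        obtain ⟨r, hr⟩ := Submodule.mem_span_singleton.mp n.2
        have h1 : (LinearMap.lTensor K (Submodule.span R {x}).subtype) (c ⊗ₜ n)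
            = c ⊗ₜ[R] (n : M) := rfl
        rw [h1, ← hr, ← TensorProduct.smul_tmul, Algebra.smul_def]
        have : (algebraMap R K r * c) ⊗ₜ[R] x
            = (algebraMap R K r * c) • ((1 : K) ⊗ₜ[R] x) := by
          rw [TensorProduct.smul_tmul', smul_eq_mul, mul_one]
        rw [this]
        exact Submodule.smul_mem _ _ (Submodule.mem_span_singleton_self _)
    | add a b ha hb =>
        rw [map_add]
        exact Submodule.add_mem _ ha hb
  · rw [Submodule.span_le, Set.singleton_subset_iff]
    simp only [SetLike.mem_coe, LinearMap.mem_ker, LinearMap.baseChange_tmul]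
    rw [show (Submodule.span R {x}).mkQ x = 0 by
      simp [Submodule.mem_span_singleton_self], TensorProduct.tmul_zero]

/-- Rank–nullity for the image of a submodule containing the kernel. -/
lemma finrank_map_add_of_ker_le {K V W : Type*} [Field K] [AddCommGroup V] [Module K V]
    [AddCommGroup W] [Module K W] [FiniteDimensional K V]
    (f : V →ₗ[K] W) (P : Submodule K V) (h : LinearMap.ker f ≤ P) :
    Module.finrank K (P.map f) + Module.finrank K (LinearMap.ker f) = Module.finrank K P := by
  have h1 := LinearMap.finrank_range_add_finrank_ker (f.domRestrict P)
  rw [LinearMap.range_domRestrict] at h1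
  have h2 : LinearMap.ker (f.domRestrict P) = Submodule.comap P.subtype (LinearMap.ker f) := by
    ext y; simp [LinearMap.domRestrict]
  rw [h2, LinearEquiv.finrank_eq (Submodule.comapSubtypeEquivOfLe h)] at h1
  exact h1

/-- The rank of a finite subset `A` of the ground set: the dimension over `K` of the
`K`-span of the images of `v i` (`i ∈ A`) in `M ⊗[𝓞 K] K`. -/
noncomputable def rkFun (K : Type) [Field K] [NumberField K]
    {ι M : Type} [AddCommGroup M] [Module (𝓞 K) M]
    (v : ι → M) (A : Finset ι) : ℕ :=
  Module.finrank K
    (Submodule.span K ((fun i => (1 : K) ⊗ₜ[𝓞 K] v i) '' (A : Set ι)))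

/-- The multiplicity `m(A)`: the cardinality of the torsion submodule of
`M(A) = M ⧸ span (𝓞 K) (v '' A)`. -/
noncomputable def mFun (K : Type) [Field K] [NumberField K]
    {ι M : Type} [AddCommGroup M] [Module (𝓞 K) M]
    (v : ι → M) (A : Finset ι) : ℕ :=
  Nat.card (Submodule.torsion (𝓞 K) (M ⧸ Submodule.span (𝓞 K) (v '' (A : Set ι))))

/-- The evaluated Tutte polynomial
`T̃(x,y) = Σ_{A ⊆ ι} m(A) (x-1)^(r - rk A) (y-1)^(|A| - rk A) ∈ ℤ[x,y]`,
realized as a multivariate polynomial in the two variables `X 0 = x`, `X 1 = y`. -/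
noncomputable def tuttePoly (K : Type) [Field K] [NumberField K]
    {ι M : Type} [Fintype ι] [AddCommGroup M] [Module (𝓞 K) M]
    (v : ι → M) : MvPolynomial (Fin 2) ℤ :=
  ∑ A : Finset ι,
    (mFun K v A : MvPolynomial (Fin 2) ℤ) *
      (MvPolynomial.X 0 - 1) ^ (rkFun K v Finset.univ - rkFun K v A) *
      (MvPolynomial.X 1 - 1) ^ (A.card - rkFun K v A)

section Reindex

open scoped TensorProduct
open NumberField

variable (K : Type) [Field K] [NumberField K] {ι : Type} [DecidableEq ι] (i : ι)

omit [DecidableEq ι] in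
lemma image_coe_eq {X : Type} (w : ι → X) (B : Finset {j : ι // j ≠ i}) :
    (fun j : {j : ι // j ≠ i} => w (j : ι)) '' (B : Set {j : ι // j ≠ i}) =
      w '' ((B.map (Function.Embedding.subtype _)) : Set ι) := by
  rw [Finset.coe_map, Set.image_image]
  rfl

lemma rkFun_subtype {M : Type} [AddCommGroup M] [Module (𝓞 K) M] (w : ι → M)
    (B : Finset {j : ι // j ≠ i}) :
    rkFun K (fun j : {j : ι // j ≠ i} => w (j : ι)) B =
      rkFun K w (B.map (Function.Embedding.subtype _)) := by
  unfold rkFun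
  rw [show ((fun j : {j : ι // j ≠ i} => (1 : K) ⊗ₜ[𝓞 K] w (j : ι)) ''
      (B : Set {j : ι // j ≠ i})) = (fun k => (1 : K) ⊗ₜ[𝓞 K] w k) ''
      ((B.map (Function.Embedding.subtype _)) : Set ι) from
    image_coe_eq i (fun k => (1 : K) ⊗ₜ[𝓞 K] w k) B]

lemma mFun_subtype {M : Type} [AddCommGroup M] [Module (𝓞 K) M] (w : ι → M)
    (B : Finset {j : ι // j ≠ i}) :
    mFun K (fun j : {j : ι // j ≠ i} => w (j : ι)) B =
      mFun K w (B.map (Function.Embedding.subtype _)) := by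
  unfold mFun
  rw [image_coe_eq i w B]

variable {M : Type} [AddCommGroup M] [Module (𝓞 K) M]

lemma mFun_quot (v : ι → M) (A : Finset ι) :
    mFun K (fun j : ι =>
        (Submodule.Quotient.mk (v j) : M ⧸ Submodule.span (𝓞 K) {v i})) A =
      mFun K v (insert i A) := by
  set N := Submodule.span (𝓞 K) {v i} with hN
  unfold mFun
  refine natCard_torsion_congr
    ((Submodule.quotEquivOfEq _ _ ?_).trans
      ((Submodule.quotientQuotientEquivQuotientSup N
        (Submodule.span (𝓞 K) (v '' (A : Set ι)))).trans
        (Submodule.quotEquivOfEq _ _ ?_)))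
  · rw [Submodule.map_span]
    congr 1
    rw [Set.image_image]
    simp [Submodule.mkQ_apply]
  · rw [Finset.coe_insert, Set.image_insert_eq, Submodule.span_insert]

lemma rk_quot [Module.Finite (𝓞 K) M] (v : ι → M) (hi : rkFun K v {i} = 1) (A : Finset ι) :
    rkFun K (fun j : ι =>
        (Submodule.Quotient.mk (v j) : M ⧸ Submodule.span (𝓞 K) {v i})) A + 1 =
      rkFun K v (insert i A) := by
  set N := Submodule.span (𝓞 K) {v i} with hN
  set f := LinearMap.baseChange K N.mkQ with hf
  have hker : LinearMap.ker f = Submodule.span K {(1 : K) ⊗ₜ[𝓞 K] v i} :=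
    ker_baseChange_mkQ K (v i)
  have hL1 : Module.finrank K (LinearMap.ker f) = 1 := by
    rw [hker]
    have h := hi
    unfold rkFun at h
    rwa [Finset.coe_singleton, Set.image_singleton] at h
  set T := Submodule.span K ((fun j => (1 : K) ⊗ₜ[𝓞 K] v j) '' (A : Set ι)) with hT
  have hmap : Submodule.span K ((fun j : ι =>
      (1 : K) ⊗ₜ[𝓞 K] (Submodule.Quotient.mk (v j) : M ⧸ N)) '' (A : Set ι)) =
      T.map f := by
    rw [hT, Submodule.map_span, Set.image_image]
    congr 1
  set P := Submodule.span K ((fun j => (1 : K) ⊗ₜ[𝓞 K] v j) ''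
      ((insert i A : Finset ι) : Set ι)) with hP'
  have hP : P = LinearMap.ker f ⊔ T := by
    rw [hP', hker, Finset.coe_insert, Set.image_insert_eq, Submodule.span_insert]
  have hle : LinearMap.ker f ≤ P := hP ▸ le_sup_left
  have hbot : (LinearMap.ker f).map f = ⊥ := by
    rw [Submodule.eq_bot_iff]
    rintro y ⟨x, hx, rfl⟩
    exact hx
  have hmapP : P.map f = T.map f := by
    rw [hP, Submodule.map_sup, hbot, bot_sup_eq]
  have hrn := finrank_map_add_of_ker_le f P hle
  unfold rkFun
  rw [hL1] at hrn
  rw [hmap, ← hmapP, ← hP']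
  exact hrn

end Reindex

/-- deletion–contraction for an element `i` that is neither a loop
(`rk {i} = 1`) nor a coloop (`rk (ι ∖ {i}) = r`). -/
theorem tuttePoly_deletion_contraction
    (K : Type) [Field K] [NumberField K]
    (ι : Type) [Fintype ι] [DecidableEq ι]
    (M₀ : Type) [AddCommGroup M₀] [Module (𝓞 K) M₀] [Module.Finite (𝓞 K) M₀]
    (v : ι → M₀) (i : ι)
    (hnotloop : rkFun K v {i} = 1)
    (hnotcoloop : rkFun K v {i}ᶜ = rkFun K v Finset.univ) :
    tuttePoly K v =
      tuttePoly K (fun j : {j : ι // j ≠ i} => v (j : ι)) +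
      tuttePoly K (fun j : {j : ι // j ≠ i} =>
        (Submodule.Quotient.mk (v (j : ι)) : M₀ ⧸ Submodule.span (𝓞 K) {v i})) := by
  classical
  set e : {j : ι // j ≠ i} ↪ ι := Function.Embedding.subtype _ with he
  have huniv : (Finset.univ : Finset {j : ι // j ≠ i}).map e = {i}ᶜ := by
    ext j
    simp [he]
  have hinsuniv : insert i ({i}ᶜ : Finset ι) = Finset.univ := by
    ext j
    by_cases h : j = i <;> simp [h]
  have hnotmem : ∀ B : Finset {j : ι // j ≠ i}, i ∉ B.map e := by
    intro B hB
    obtain ⟨b, _, hb⟩ := Finset.mem_map.mp hB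
    exact b.2 (by simpa [he] using hb)
  have hconr : rkFun K (fun j : ι =>
      (Submodule.Quotient.mk (v j) : M₀ ⧸ Submodule.span (𝓞 K) {v i})) ({i}ᶜ : Finset ι) + 1
      = rkFun K v Finset.univ := by
    rw [rk_quot K i v hnotloop ({i}ᶜ : Finset ι), hinsuniv]
  unfold tuttePoly
  simp only [rkFun_subtype K i v, mFun_subtype K i v,
    rkFun_subtype K i (fun j : ι =>
      (Submodule.Quotient.mk (v j) : M₀ ⧸ Submodule.span (𝓞 K) {v i})),
    mFun_subtype K i (fun j : ι =>
      (Submodule.Quotient.mk (v j) : M₀ ⧸ Submodule.span (𝓞 K) {v i})), huniv]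
  rw [← Finset.sum_filter_add_sum_filter_not Finset.univ (fun A => i ∈ A), add_comm]
  congr 1
  · -- deletion part
    refine (Finset.sum_nbij' (fun A : Finset ι => A.subtype (· ≠ i))
      (fun B : Finset {j : ι // j ≠ i} => B.map e) (fun A _ => Finset.mem_univ _) ?_ ?_ ?_ ?_)
    · intro B _
      simp only [Finset.mem_filter, Finset.mem_univ, true_and]
      exact hnotmem B
    · intro A hA
      simp only [Finset.mem_filter, Finset.mem_univ, true_and] at hA
      beta_reduce
      rw [Finset.subtype_map, Finset.filter_ne', Finset.erase_eq_of_notMem hA]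
    · intro B _
      ext ⟨b, hb⟩
      simp [he, hb]
    · intro A hA
      simp only [Finset.mem_filter, Finset.mem_univ, true_and] at hA
      beta_reduce
      have hA' : (A.subtype (· ≠ i)).map e = A := by
        rw [Finset.subtype_map, Finset.filter_ne', Finset.erase_eq_of_notMem hA]
      have hc : (A.subtype (· ≠ i)).card = A.card := by
        rw [Finset.card_subtype, Finset.filter_ne', Finset.erase_eq_of_notMem hA]
      rw [hA', hc, ← he, huniv, hnotcoloop]
  · -- contraction part
    refine (Finset.sum_nbij' (fun A : Finset ι => A.subtype (· ≠ i))
      (fun B : Finset {j : ι // j ≠ i} => insert i (B.map e)) (fun A _ => Finset.mem_univ _)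
      ?_ ?_ ?_ ?_)
    · intro B _
      simp only [Finset.mem_filter, Finset.mem_univ, true_and]
      exact Finset.mem_insert_self i _
    · intro A hA
      simp only [Finset.mem_filter, Finset.mem_univ, true_and] at hA
      beta_reduce
      rw [Finset.subtype_map, Finset.filter_ne', Finset.insert_erase hA]
    · intro B _
      ext ⟨b, hb⟩
      simp [he, hb]
    · intro A hA
      simp only [Finset.mem_filter, Finset.mem_univ, true_and] at hA
      beta_reduce
      have hA' : (A.subtype (· ≠ i)).map e = A.erase i := by
        rw [Finset.subtype_map, Finset.filter_ne']
      have hAi : insert i (A.erase i) = A := Finset.insert_erase hA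
      have hc : (A.subtype (· ≠ i)).card = (A.erase i).card := by
        rw [Finset.card_subtype, Finset.filter_ne']
      rw [hA', hc]
      rw [mFun_quot K i v (A.erase i), hAi]
      have hrk : rkFun K (fun j : ι =>
          (Submodule.Quotient.mk (v j) : M₀ ⧸ Submodule.span (𝓞 K) {v i})) (A.erase i) + 1
          = rkFun K v A := by
        rw [rk_quot K i v hnotloop (A.erase i), hAi]
      have hcard : (A.erase i).card + 1 = A.card := by
        have hpos : 0 < A.card := Finset.card_pos.mpr ⟨i, hA⟩
        rw [Finset.card_erase_of_mem hA]
        omega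
      rw [← he, huniv]
      rw [← hconr, ← hrk, ← hcard]
      simp only [Nat.add_sub_add_right]
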